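/- The n-th power of the q-integration operator is given by the q-Duhamel product with z^n/[n]_q!: for f ∈ W(𝔻), (V_q^n f)(z) = (1/[n]_q!) (z^n ⋆_q f)(z), where V_q f(z) = ∫_0^z f(t) d_q t. -/

import Mathlib

open Finset

noncomputable def qfact (q : ℂ) (n : ℕ) : ℂ :=
  ∏ j ∈ Finset.range n, (1 - q ^ (j + 1)) / (1 - q)

/-- Coefficients of the q-Duhamel product. -/
noncomputable def duh (q : ℂ) (a b : ℕ → ℂ) (n : ℕ) : ℂ :=
  ∑ k ∈ Finset.range (n + 1), a k * b (n - k) * qfact q k * qfact q (n - k) / qfact q n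

/-- The Jackson q-integration operator on Taylor coefficients: `z^m ↦ z^{m+1}/[m+1]_q`. -/
noncomputable def Vcoeff (q : ℂ) (a : ℕ → ℂ) : ℕ → ℂ
  | 0 => 0
  | (m + 1) => a m / ((1 - q ^ (m + 1)) / (1 - q))

lemma qnum_ne (q : ℝ) (hq0 : 0 < q) (hq1 : q < 1) (k : ℕ) :
    (1 - (q : ℂ) ^ (k + 1)) / (1 - (q : ℂ)) ≠ 0 := by
  have h1 : q ^ (k + 1) < 1 := pow_lt_one₀ hq0.le hq1 (Nat.succ_ne_zero k)
  apply div_ne_zero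
  · rw [sub_ne_zero]
    intro h
    have : (1 : ℝ) = q ^ (k + 1) := by exact_mod_cast h
    linarith
  · rw [sub_ne_zero]
    intro h
    have : (1 : ℝ) = q := by exact_mod_cast h
    linarith

lemma qfact_ne (q : ℝ) (hq0 : 0 < q) (hq1 : q < 1) (n : ℕ) : qfact (q : ℂ) n ≠ 0 :=
  Finset.prod_ne_zero_iff.mpr fun j _ => qnum_ne q hq0 hq1 j

lemma qfact_succ (q : ℂ) (n : ℕ) :
    qfact q (n + 1) = qfact q n * ((1 - q ^ (n + 1)) / (1 - q)) := by
  rw [qfact, Finset.prod_range_succ]; rfl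

lemma Vpow (q : ℝ) (hq0 : 0 < q) (hq1 : q < 1) (a : ℕ → ℂ) (n : ℕ) : ∀ m : ℕ,
    (Vcoeff (q : ℂ))^[n] a m
      = if n ≤ m then a (m - n) * qfact (q : ℂ) (m - n) / qfact (q : ℂ) m else 0 := by
  induction n with
  | zero => intro m; simp [mul_div_assoc, div_self (qfact_ne q hq0 hq1 m)]
  | succ n ih =>
    intro m
    rw [Function.iterate_succ_apply']
    match m with
    | 0 => simp [Vcoeff]
    | m + 1 =>
      have hnum := qnum_ne q hq0 hq1 m
      have hf := qfact_ne q hq0 hq1 m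
      simp only [Vcoeff, ih m, Nat.succ_le_succ_iff, Nat.succ_sub_succ]
      by_cases h : n ≤ m
      · simp only [h, if_true, qfact_succ]
        field_simp
      · simp [h]

theorem Vq_pow_eq_duhamel (q : ℝ) (hq0 : 0 < q) (hq1 : q < 1) (a : ℕ → ℂ)
    (ha : Summable fun n => ‖a n‖) (n m : ℕ) :
    (Vcoeff (q : ℂ))^[n] a m
      = (1 / qfact (q : ℂ) n) * duh (q : ℂ) (fun k => if k = n then 1 else 0) a m := by
  rw [Vpow q hq0 hq1 a n m, duh]
  by_cases h : n ≤ m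
  · rw [if_pos h, Finset.sum_eq_single n]
    · simp only [if_pos rfl, one_mul]
      have hn := qfact_ne q hq0 hq1 n
      have hm := qfact_ne q hq0 hq1 m
      field_simp
      simp
    · intro b _ hb; simp [hb]
    · intro h'; exact absurd (Finset.mem_range.mpr (by omega)) h'
  · rw [if_neg h, Finset.sum_eq_zero, mul_zero]
    intro k hk
    have hk' : k ≠ n := by simp at hk; omega
    simp [hk']
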